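/- Let c_n denote the number of UUD-equivalence classes of ballot paths of length n. Then c₀ = 1, c₁ = 1, c₂ = 1, and c_{n+3} = c_{n+2} + c_n for every n ≥ 0. -/

import Mathlib

/-- A path is a list of steps: `true` is an up-step U, `false` is a down-step D. -/
abbrev Step := Bool

/-- The height of the `j`-th lattice point of the path `p`. -/
def pathHeight (p : List Bool) (j : ℕ) : ℤ :=
  ((p.take j).count true : ℤ) - ((p.take j).count false : ℤ)

/-- A ballot path: every prefix has at least as many U's as D's. -/
def IsBallot (p : List Bool) : Prop :=
  ∀ k : ℕ, (p.take k).count false ≤ (p.take k).count true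

/-- A Dyck path: a ballot path with equally many U's and D's. -/
def IsDyck (p : List Bool) : Prop :=
  IsBallot p ∧ p.count true = p.count false

/-- The string `τ` occurs at (0-indexed) position `i` of the path `p`. -/
def OccursAt (τ p : List Bool) (i : ℕ) : Prop :=
  (p.drop i).take τ.length = τ

/-- Two paths are `τ`-equivalent: same length and occurrences of `τ` at the same positions. -/
def PathEquiv (τ p q : List Bool) : Prop :=
  p.length = q.length ∧ ∀ i : ℕ, OccursAt τ p i ↔ OccursAt τ q i

/-- The setoid of `τ`-equivalence on ballot paths of length `n`. -/
def ballotSetoid (τ : List Bool) (n : ℕ) :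
    Setoid {p : List Bool // IsBallot p ∧ p.length = n} where
  r p q := PathEquiv τ p.1 q.1
  iseqv := ⟨fun _ => ⟨rfl, fun _ => Iff.rfl⟩,
            fun h => ⟨h.1.symm, fun i => (h.2 i).symm⟩,
            fun h1 h2 => ⟨h1.1.trans h2.1, fun i => (h1.2 i).trans (h2.2 i)⟩⟩

/-- The number of `τ`-equivalence classes of ballot paths of length `n`. -/
noncomputable def numBallotClasses (τ : List Bool) (n : ℕ) : ℕ :=
  Nat.card (Quotient (ballotSetoid τ n))

/-- The setoid of `τ`-equivalence on Dyck paths of semilength `n`. -/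
def dyckSetoid (τ : List Bool) (n : ℕ) :
    Setoid {p : List Bool // IsDyck p ∧ p.length = 2 * n} where
  r p q := PathEquiv τ p.1 q.1
  iseqv := ⟨fun _ => ⟨rfl, fun _ => Iff.rfl⟩,
            fun h => ⟨h.1.symm, fun i => (h.2 i).symm⟩,
            fun h1 h2 => ⟨h1.1.trans h2.1, fun i => (h1.2 i).trans (h2.2 i)⟩⟩

/-- The number of `τ`-equivalence classes of Dyck paths of semilength `n`. -/
noncomputable def numDyckClasses (τ : List Bool) (n : ℕ) : ℕ :=
  Nat.card (Quotient (dyckSetoid τ n))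

lemma take3_eq_iff (l : List Bool) (a b c : Bool) :
    l.take 3 = [a, b, c] ↔ l[0]? = some a ∧ l[1]? = some b ∧ l[2]? = some c := by
  rcases l with _ | ⟨x, _ | ⟨y, _ | ⟨z, t⟩⟩⟩ <;> simp [List.take]

lemma occursAt_iff (p : List Bool) (i : ℕ) :
    OccursAt [true, true, false] p i ↔
      p[i]? = some true ∧ p[i+1]? = some true ∧ p[i+2]? = some false := by
  unfold OccursAt
  rw [show ([true, true, false] : List Bool).length = 3 from rfl, take3_eq_iff]
  simp [List.getElem?_drop]

lemma occ_bound {p : List Bool} {i : ℕ} (h : OccursAt [true,true,false] p i) :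
    i + 3 ≤ p.length := by
  rw [occursAt_iff] at h
  rcases List.getElem?_eq_some_iff.mp h.2.2 with ⟨hh, -⟩
  omega

lemma occ_gap {p : List Bool} {i j : ℕ} (hi : OccursAt [true,true,false] p i)
    (hj : OccursAt [true,true,false] p j) (hlt : i < j) : i + 3 ≤ j := by
  rw [occursAt_iff] at hi hj
  by_contra h
  rcases (by omega : j = i + 1 ∨ j = i + 2) with rfl | rfl
  · have e : i + 1 + 1 = i + 2 := by omega
    rw [e, hi.2.2] at hj
    simp at hj
  · rw [hi.2.2] at hj; simp at hj

def canon (n : ℕ) (A : Finset ℕ) : List Bool :=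
  (List.range n).map (fun k => ! decide (∃ i ∈ A, k = i + 2))

lemma canon_length (n : ℕ) (A : Finset ℕ) : (canon n A).length = n := by
  simp [canon]

lemma canon_get (n : ℕ) (A : Finset ℕ) {k : ℕ} (h : k < n) :
    (canon n A)[k]? = some (! decide (∃ i ∈ A, k = i + 2)) := by
  simp [canon, List.getElem?_map, List.getElem?_range, h]

lemma count_true_add_count_false (l : List Bool) :
    l.count true + l.count false = l.length := by
  induction l with
  | nil => rfl
  | cons a t ih => cases a <;> simp [List.count_cons] <;> omega

lemma canon_count_false (n : ℕ) (A : Finset ℕ) :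
    (canon n A).count false = ((A.filter (fun i => i + 2 < n)).image (· + 2)).card := by
  have h1 : (canon n A).count false
      = List.countP (fun k => decide (∃ i ∈ A, k = i + 2)) (List.range n) := by
    simp only [canon, List.count, List.countP_map]
    congr 1
    funext k
    simp
  have h2 : ((Finset.range n).filter (fun k => ∃ i ∈ A, k = i + 2)).card
      = List.countP (fun k => decide (∃ i ∈ A, k = i + 2)) (List.range n) := by
    rw [List.countP_eq_length_filter]
    simp [Finset.filter, Finset.range, Finset.card, Multiset.range]
  have h3 : (Finset.range n).filter (fun k => ∃ i ∈ A, k = i + 2)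
      = (A.filter (fun i => i + 2 < n)).image (· + 2) := by
    ext k
    simp only [Finset.mem_filter, Finset.mem_range, Finset.mem_image]
    constructor
    · rintro ⟨hk, i, hi, rfl⟩; exact ⟨i, ⟨hi, hk⟩, rfl⟩
    · rintro ⟨i, ⟨hi, hlt⟩, rfl⟩; exact ⟨hlt, i, hi, rfl⟩
  rw [h1, ← h2, h3]

def Gap (A : Finset ℕ) : Prop := ∀ i ∈ A, ∀ j ∈ A, i < j → i + 3 ≤ j

instance : DecidablePred Gap := fun A =>
  inferInstanceAs (Decidable (∀ i ∈ A, ∀ j ∈ A, i < j → i + 3 ≤ j))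

lemma canon_count_bound (n : ℕ) (A : Finset ℕ) (hg : Gap A) :
    2 * (canon n A).count false ≤ n := by
  rw [canon_count_false]
  rw [Finset.card_image_of_injective _ (fun a b h => by omega)]
  set A' := A.filter (fun i => i + 2 < n) with hA'
  rcases A'.eq_empty_or_nonempty with he | ⟨x, hx⟩
  · simp [he]
  · have hn : 3 ≤ n := by
      have := (Finset.mem_filter.mp hx).2; omega
    have hcard : A'.card ≤ (Finset.range ((n - 3) / 3 + 1)).card := by
      apply Finset.card_le_card_of_injOn (fun i => i / 3)
      · intro i hi
        have h2 : i + 2 < n := (Finset.mem_filter.mp hi).2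
        have : i / 3 ≤ (n - 3) / 3 := Nat.div_le_div_right (by omega)
        simp only [Finset.mem_coe, Finset.mem_range]; show i / 3 < (n - 3) / 3 + 1; omega
      · intro i hi j hj hij
        simp only at hij
        by_contra hne
        rcases Nat.lt_or_ge i j with h | h
        · have := hg i (Finset.mem_filter.mp hi).1 j (Finset.mem_filter.mp hj).1 h
          have : i / 3 < j / 3 := by
            calc i / 3 < i / 3 + 1 := Nat.lt_succ_self _
            _ = (i + 3) / 3 := (Nat.add_div_right i (by norm_num)).symm
            _ ≤ j / 3 := Nat.div_le_div_right this
          omega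
        · have hlt : j < i := by omega
          have := hg j (Finset.mem_filter.mp hj).1 i (Finset.mem_filter.mp hi).1 hlt
          have : j / 3 < i / 3 := by
            calc j / 3 < j / 3 + 1 := Nat.lt_succ_self _
            _ = (j + 3) / 3 := (Nat.add_div_right j (by norm_num)).symm
            _ ≤ i / 3 := Nat.div_le_div_right this
          omega
    rw [Finset.card_range] at hcard
    omega

lemma canon_ballot (n : ℕ) (A : Finset ℕ) (hg : Gap A) :
    ∀ k : ℕ, ((canon n A).take k).count false ≤ ((canon n A).take k).count true := by
  intro k
  have htake : (canon n A).take k = canon (min k n) A := by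
    simp only [canon]
    rw [← List.map_take, List.take_range]
  rw [htake]
  have h1 := canon_count_bound (min k n) A hg
  have h2 := count_true_add_count_false (canon (min k n) A)
  rw [canon_length] at h2
  omega

def occSet (p : List Bool) : Finset ℕ :=
  (Finset.range p.length).filter (fun i => (p.drop i).take 3 = [true, true, false])

lemma mem_occSet {p : List Bool} {i : ℕ} :
    i ∈ occSet p ↔ OccursAt [true, true, false] p i := by
  simp only [occSet, Finset.mem_filter, Finset.mem_range]
  constructor
  · rintro ⟨-, h⟩; exact h
  · intro h; exact ⟨by have := occ_bound h; omega, h⟩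

def sparseSets (m : ℕ) : Finset (Finset ℕ) :=
  (Finset.range m).powerset.filter Gap

lemma mem_sparseSets {m : ℕ} {A : Finset ℕ} :
    A ∈ sparseSets m ↔ (∀ i ∈ A, i < m) ∧ Gap A := by
  simp [sparseSets, Finset.subset_iff, Finset.mem_range]

lemma occSet_mem_sparse {p : List Bool} {n : ℕ} (hl : p.length = n) :
    occSet p ∈ sparseSets (n - 2) := by
  rw [mem_sparseSets]
  constructor
  · intro i hi
    have := occ_bound (mem_occSet.mp hi); omega
  · intro i hi j hj hij
    exact occ_gap (mem_occSet.mp hi) (mem_occSet.mp hj) hij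

lemma canon_occ {n : ℕ} {A : Finset ℕ} (hA : A ∈ sparseSets (n - 2)) (i : ℕ) :
    OccursAt [true, true, false] (canon n A) i ↔ i ∈ A := by
  rw [mem_sparseSets] at hA
  obtain ⟨hsub, hg⟩ := hA
  rw [occursAt_iff]
  constructor
  · rintro ⟨-, -, h2⟩
    have hlt : i + 2 < n := by
      rcases List.getElem?_eq_some_iff.mp h2 with ⟨hh, -⟩
      rwa [canon_length] at hh
    rw [canon_get n A hlt] at h2
    simp only [Option.some.injEq, Bool.not_eq_false'] at h2
    rcases of_decide_eq_true h2 with ⟨j, hj, hje⟩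
    have : j = i := by omega
    subst this; exact hj
  · intro hi
    have hlt : i + 2 < n := by have := hsub i hi; omega
    refine ⟨?_, ?_, ?_⟩
    · rw [canon_get n A (by omega)]
      simp only [Option.some.injEq, Bool.not_eq_true']
      apply decide_eq_false
      rintro ⟨j, hj, hje⟩
      have := hg j hj i hi (by omega); omega
    · rw [canon_get n A (by omega)]
      simp only [Option.some.injEq, Bool.not_eq_true']
      apply decide_eq_false
      rintro ⟨j, hj, hje⟩
      have := hg j hj i hi (by omega); omega
    · rw [canon_get n A hlt]
      simp only [Option.some.injEq, Bool.not_eq_false']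
      exact decide_eq_true ⟨i, hi, rfl⟩

lemma canon_occSet {n : ℕ} {A : Finset ℕ} (hA : A ∈ sparseSets (n - 2)) :
    occSet (canon n A) = A := by
  ext i; rw [mem_occSet, canon_occ hA]

lemma pathEquiv_of_occSet {p q : List Bool} (hl : p.length = q.length)
    (ho : occSet p = occSet q) : PathEquiv [true, true, false] p q := by
  refine ⟨hl, fun i => ?_⟩
  rw [← mem_occSet, ← mem_occSet, ho]

noncomputable def classEquiv (n : ℕ) :
    Quotient (ballotSetoid [true, true, false] n) ≃ {A // A ∈ sparseSets (n - 2)} where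
  toFun := Quotient.lift
    (fun p => (⟨occSet p.1, occSet_mem_sparse p.2.2⟩ : {A // A ∈ sparseSets (n - 2)}))
    (by
      rintro p q h
      apply Subtype.ext
      ext i
      simp only [mem_occSet]
      exact h.2 i)
  invFun := fun A => Quotient.mk _
    ⟨canon n A.1, canon_ballot n A.1 (mem_sparseSets.mp A.2).2, canon_length n A.1⟩
  left_inv := by
    apply Quotient.ind
    intro p
    apply Quotient.sound
    show PathEquiv _ _ _
    apply pathEquiv_of_occSet
    · rw [canon_length, p.2.2]
    · exact canon_occSet (occSet_mem_sparse p.2.2)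
  right_inv := fun A => Subtype.ext (canon_occSet A.2)

lemma numBallotClasses_eq (n : ℕ) :
    numBallotClasses [true, true, false] n = (sparseSets (n - 2)).card := by
  rw [numBallotClasses, Nat.card_congr (classEquiv n)]
  simp [Nat.card_eq_fintype_card]

lemma sparse_card_rec (m : ℕ) :
    (sparseSets (m + 3)).card = (sparseSets (m + 2)).card + (sparseSets m).card := by
  classical
  have hsplit := Finset.card_filter_add_card_filter_not
    (s := sparseSets (m + 3)) (p := fun A => m + 2 ∈ A)
  have h1 : (sparseSets (m + 3)).filter (fun A => m + 2 ∉ A) = sparseSets (m + 2) := by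
    ext A
    simp only [Finset.mem_filter, mem_sparseSets]
    constructor
    · rintro ⟨⟨hsub, hg⟩, hnm⟩
      refine ⟨fun i hi => ?_, hg⟩
      have h3 := hsub i hi
      rcases eq_or_ne i (m + 2) with rfl | hne
      · exact absurd hi hnm
      · omega
    · rintro ⟨hsub, hg⟩
      exact ⟨⟨fun i hi => by have := hsub i hi; omega, hg⟩,
        fun hm => by have := hsub _ hm; omega⟩
  have h2 : ((sparseSets (m + 3)).filter (fun A => m + 2 ∈ A)).card = (sparseSets m).card := by
    refine Finset.card_bij' (fun A _ => A.erase (m + 2)) (fun B _ => insert (m + 2) B)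
      ?hi ?hj ?li ?ri
    case hi =>
      intro A hA
      rw [Finset.mem_filter, mem_sparseSets] at hA
      obtain ⟨⟨hsub, hg⟩, hm⟩ := hA
      rw [mem_sparseSets]
      constructor
      · intro i hi
        rw [Finset.mem_erase] at hi
        have h1 := hsub i hi.2
        have h2 : i < m + 2 := by have := hi.1; omega
        have := hg i hi.2 (m + 2) hm h2
        omega
      · intro i hi j hj hij
        exact hg i (Finset.mem_of_mem_erase hi) j (Finset.mem_of_mem_erase hj) hij
    case hj =>
      intro B hB
      rw [mem_sparseSets] at hB
      obtain ⟨hsub, hg⟩ := hB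
      rw [Finset.mem_filter, mem_sparseSets]
      refine ⟨⟨fun i hi => ?_, fun i hi j hj hij => ?_⟩, Finset.mem_insert_self _ _⟩
      · rcases Finset.mem_insert.mp hi with rfl | h
        · omega
        · have := hsub i h; omega
      · rcases Finset.mem_insert.mp hi with rfl | hiB
        · rcases Finset.mem_insert.mp hj with rfl | hjB
          · omega
          · have := hsub j hjB; omega
        · rcases Finset.mem_insert.mp hj with rfl | hjB
          · have := hsub i hiB; omega
          · exact hg i hiB j hjB hij
    case li =>
      intro A hA
      rw [Finset.mem_filter] at hA
      exact Finset.insert_erase hA.2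
    case ri =>
      intro B hB
      rw [mem_sparseSets] at hB
      exact Finset.erase_insert (fun hm => by have := hB.1 _ hm; omega)
  rw [h1, h2] at hsplit
  omega

lemma sparse0 : (sparseSets 0).card = 1 := by decide
lemma sparse1 : (sparseSets 1).card = 2 := by decide
lemma sparse2 : (sparseSets 2).card = 3 := by decide

/-- the numbers of UUD-equivalence classes of ballot paths satisfy
`c₀ = c₁ = c₂ = 1` and `c_{n+3} = c_{n+2} + c_n`. -/
theorem uud_classes_recurrence :
    numBallotClasses [true, true, false] 0 = 1 ∧
    numBallotClasses [true, true, false] 1 = 1 ∧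
    numBallotClasses [true, true, false] 2 = 1 ∧
    ∀ n : ℕ, numBallotClasses [true, true, false] (n + 3) =
      numBallotClasses [true, true, false] (n + 2) +
        numBallotClasses [true, true, false] n := by
  refine ⟨?_, ?_, ?_, ?_⟩
  · rw [numBallotClasses_eq]; exact sparse0
  · rw [numBallotClasses_eq]; exact sparse0
  · rw [numBallotClasses_eq]; exact sparse0
  · intro n
    rw [numBallotClasses_eq, numBallotClasses_eq, numBallotClasses_eq]
    match n with
    | 0 => show (sparseSets 1).card = (sparseSets 0).card + (sparseSets 0).card
           rw [sparse0, sparse1]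
    | 1 => show (sparseSets 2).card = (sparseSets 1).card + (sparseSets 0).card
           rw [sparse0, sparse1, sparse2]
    | (m + 2) =>
      have e1 : m + 2 + 3 - 2 = m + 3 := by omega
      have e2 : m + 2 + 2 - 2 = m + 2 := by omega
      have e3 : m + 2 - 2 = m := by omega
      rw [e1, e2, e3]
      exact sparse_card_rec m
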